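/- For any finite simple graph G, the number of acyclic orientations of G equals (−1)^{|V(G)|} times the chromatic polynomial of G evaluated at −1 (Stanley's theorem, a Tutte polynomial evaluation). -/

import Mathlib

/-- `r` is an acyclic orientation of `G`: each edge of `G` is given exactly one
direction, only edges of `G` are directed, and there is no directed cycle. -/
def IsAcyclicOrientation {V : Type} (G : SimpleGraph V) (r : V → V → Prop) : Prop :=
  (∀ u v, r u v → G.Adj u v) ∧
  (∀ u v, G.Adj u v → (r u v ↔ ¬ r v u)) ∧
  ¬ ∃ (n : ℕ) (f : Fin (n + 1) → V), 0 < n ∧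
      (∀ i : Fin n, r (f i.castSucc) (f i.succ)) ∧ f 0 = f (Fin.last n)

open Finset Polynomial

namespace StanleyAux

variable {V : Type} [Fintype V] [DecidableEq V]

/-- number of acyclic orientations -/
noncomputable def nA (G : SimpleGraph V) : ℕ :=
  Nat.card {r : V → V → Prop // IsAcyclicOrientation G r}

/-- number of proper colorings with k colors -/
noncomputable def nC (G : SimpleGraph V) (k : ℕ) : ℕ :=
  Nat.card {f : V → Fin k // ∀ ⦃u v : V⦄, G.Adj u v → f u ≠ f v}

/-- number of surjective proper colorings with j colors -/
noncomputable def nS (G : SimpleGraph V) (j : ℕ) : ℕ :=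
  Nat.card {f : V → Fin j //
    (∀ ⦃u v : V⦄, G.Adj u v → f u ≠ f v) ∧ Function.Surjective f}

def Indep (G : SimpleGraph V) (U : Finset V) : Prop := ∀ u ∈ U, ∀ v ∈ U, ¬ G.Adj u v

/-- vertex deletion -/
def del (G : SimpleGraph V) (U : Finset V) : SimpleGraph {v : V // v ∉ U} where
  Adj a b := G.Adj a b
  symm := ⟨fun a b h => G.adj_symm h⟩
  loopless := ⟨fun a h => G.irrefl h⟩

noncomputable def NA (G : SimpleGraph V) (U : Finset V) : ℕ :=
  Nat.card {r : V → V → Prop // IsAcyclicOrientation G r ∧ ∀ u ∈ U, ∀ w, ¬ r w u}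

noncomputable def NS (G : SimpleGraph V) (j : ℕ) (U : Finset V) : ℕ :=
  Nat.card {f : V → Fin (j + 1) //
    ((∀ ⦃u v : V⦄, G.Adj u v → f u ≠ f v) ∧ Function.Surjective f) ∧
    (∀ v, f v = 0 ↔ v ∈ U)}

noncomputable def T (G : SimpleGraph V) : ℤ :=
  ∑ j ∈ range (Fintype.card V + 1), (-1) ^ (Fintype.card V - j) * (nS G j : ℤ)

lemma negOnePowSub {a b : ℕ} (h : b ≤ a) : ((-1 : ℤ)) ^ (a - b) = (-1) ^ a * (-1) ^ b := by
  have h2 : ((-1 : ℤ)) ^ b * (-1) ^ b = 1 := by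
    rw [← pow_add]; exact Even.neg_one_pow ⟨b, rfl⟩
  have h3 : ((-1 : ℤ)) ^ a = (-1) ^ (a - b) * (-1) ^ b := by
    rw [← pow_add, Nat.sub_add_cancel h]
  rw [h3, mul_assoc, h2, mul_one]

lemma cardDel (U : Finset V) :
    Fintype.card {v : V // v ∉ U} = Fintype.card V - U.card := by
  classical
  rw [Fintype.card_subtype_compl, Fintype.card_coe]

lemma nA_empty (G : SimpleGraph V) (h : Fintype.card V = 0) : nA G = 1 := by
  have : IsEmpty V := Fintype.card_eq_zero_iff.mp h
  rw [nA, Nat.card_eq_one_iff_unique]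
  constructor
  · constructor
    rintro ⟨r, _⟩ ⟨r', _⟩
    ext u v
    exact isEmptyElim u
  · refine ⟨fun _ _ => False, ?_, ?_, ?_⟩
    · intro u; exact isEmptyElim u
    · intro u; exact isEmptyElim u
    · rintro ⟨n, f, hn, hc, hcl⟩; exact isEmptyElim (f 0)

lemma nS_zero_empty (G : SimpleGraph V) (h : Fintype.card V = 0) : nS G 0 = 1 := by
  have : IsEmpty V := Fintype.card_eq_zero_iff.mp h
  rw [nS, Nat.card_eq_one_iff_unique]
  constructor
  · constructor
    rintro ⟨f, _⟩ ⟨f', _⟩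
    ext u
    exact isEmptyElim u
  · refine ⟨fun v => isEmptyElim v, ?_, ?_⟩
    · intro u; exact isEmptyElim u
    · intro y; exact isEmptyElim y

lemma nS_zero_of_ne (G : SimpleGraph V) (h : Fintype.card V ≠ 0) : nS G 0 = 0 := by
  have : Nonempty V := Fintype.card_pos_iff.mp (Nat.pos_of_ne_zero h)
  rw [nS, Nat.card_eq_zero]
  left
  constructor
  rintro ⟨f, _⟩
  exact isEmptyElim (f (Classical.arbitrary V))

lemma nS_zero_of_gt (G : SimpleGraph V) {j : ℕ} (h : Fintype.card V < j) : nS G j = 0 := by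
  rw [nS, Nat.card_eq_zero]
  left
  constructor
  rintro ⟨f, _, hs⟩
  have := Fintype.card_le_of_surjective f hs
  simp only [Fintype.card_fin] at this
  omega

lemma NS_empty_vanish (G : SimpleGraph V) (j : ℕ) : NS G j ∅ = 0 := by
  rw [NS, Nat.card_eq_zero]
  left
  constructor
  rintro ⟨f, ⟨_, hs⟩, hfib⟩
  obtain ⟨v, hv⟩ := hs 0
  simpa using (hfib v).mp hv

lemma NS_nonindep (G : SimpleGraph V) (j : ℕ) {U : Finset V} (h : ¬ Indep G U) :
    NS G j U = 0 := by
  rw [NS, Nat.card_eq_zero]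
  left
  constructor
  rintro ⟨f, ⟨hp, _⟩, hfib⟩
  simp only [Indep] at h
  push_neg at h
  obtain ⟨u, hu, v, hv, hadj⟩ := h
  exact hp hadj (((hfib u).mpr hu).trans ((hfib v).mpr hv).symm)

lemma NA_nonindep (G : SimpleGraph V) {U : Finset V} (h : ¬ Indep G U) :
    NA G U = 0 := by
  rw [NA, Nat.card_eq_zero]
  left
  constructor
  rintro ⟨r, ⟨_, h2, _⟩, hsrc⟩
  simp only [Indep] at h
  push_neg at h
  obtain ⟨u, hu, v, hv, hadj⟩ := h
  exact hsrc v hv u ((h2 u v hadj).mpr (hsrc u hu v))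


variable {V : Type} [Fintype V] [DecidableEq V]

lemma exists_source (G : SimpleGraph V) [Nonempty V] {r : V → V → Prop}
    (hr : IsAcyclicOrientation G r) : ∃ v, ∀ w, ¬ r w v := by
  by_contra h
  push_neg at h
  choose g hg using h
  obtain ⟨v₀⟩ := ‹Nonempty V›
  obtain ⟨i, j, hij, hfij⟩ := Fintype.exists_ne_map_eq_of_card_lt
    (fun i : Fin (Fintype.card V + 1) => g^[(i : ℕ)] v₀) (by simp)
  obtain ⟨a, b, hab, hfab⟩ : ∃ a b : ℕ, a < b ∧ g^[a] v₀ = g^[b] v₀ := by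
    rcases lt_or_gt_of_ne (fun hh : (i : ℕ) = (j : ℕ) => hij (Fin.ext hh)) with h' | h'
    exacts [⟨i, j, h', hfij⟩, ⟨j, i, h', hfij.symm⟩]
  have hm0 : 0 < b - a := Nat.sub_pos_of_lt hab
  refine hr.2.2 ⟨b - a, fun t => g^[b - (t : ℕ)] v₀, hm0, ?_, ?_⟩
  · intro t
    simp only [Fin.coe_castSucc, Fin.val_succ]
    have ht : (t : ℕ) < b - a := t.2
    have h1 : b - (t : ℕ) = (b - ((t : ℕ) + 1)) + 1 := by omega
    rw [h1, Function.iterate_succ_apply']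
    exact hg _
  · have h0 : ((0 : Fin (b - a + 1)) : ℕ) = 0 := rfl
    have hl : ((Fin.last (b - a)) : ℕ) = b - a := rfl
    simp only [h0, hl, Nat.sub_zero]
    rw [show b - (b - a) = a by omega]
    exact hfab.symm

/-- extend an orientation on `G - U` to all of `G`, making `U` sources -/
def srcExtend (G : SimpleGraph V) (U : Finset V)
    (r' : {v : V // v ∉ U} → {v : V // v ∉ U} → Prop) : V → V → Prop :=
  fun a b => (a ∈ U ∧ G.Adj a b) ∨ (∃ (ha : a ∉ U) (hb : b ∉ U), r' ⟨a, ha⟩ ⟨b, hb⟩)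

lemma srcExtend_target {G : SimpleGraph V} {U : Finset V} (hU : Indep G U)
    {r' : {v : V // v ∉ U} → {v : V // v ∉ U} → Prop} :
    ∀ a b, srcExtend G U r' a b → b ∉ U := by
  rintro a b (⟨haU, hadj⟩ | ⟨ha, hb, _⟩) hbU
  · exact hU a haU b hbU hadj
  · exact hb hbU

lemma NA_indep (G : SimpleGraph V) {U : Finset V} (hU : Indep G U) :
    NA G U = nA (del G U) := by
  apply Nat.card_congr
  refine ⟨fun r => ⟨fun a b => r.1 a b, ?_, ?_, ?_⟩,
          fun r' => ⟨srcExtend G U r'.1, ⟨?_, ?_, ?_⟩, ?_⟩, ?_, ?_⟩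
  · exact fun a b h => r.2.1.1 a b h
  · exact fun a b h => r.2.1.2.1 a b h
  · rintro ⟨n, f, hn, hcyc, hcl⟩
    exact r.2.1.2.2 ⟨n, fun i => (f i).1, hn, fun i => hcyc i, congrArg _ hcl⟩
  · rintro a b (⟨_, hadj⟩ | ⟨ha, hb, hr⟩)
    · exact hadj
    · exact r'.2.1 _ _ hr
  · intro a b hadj
    by_cases ha : a ∈ U
    · by_cases hb : b ∈ U
      · exact absurd hadj (hU a ha b hb)
      · refine iff_of_true (Or.inl ⟨ha, hadj⟩) (fun h => srcExtend_target hU b a h ha)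
    · by_cases hb : b ∈ U
      · refine iff_of_false (fun h => srcExtend_target hU a b h hb) ?_
        intro h
        exact h (Or.inl ⟨hb, hadj.symm⟩)
      · have e1 : srcExtend G U r'.1 a b ↔ r'.1 ⟨a, ha⟩ ⟨b, hb⟩ := by
          constructor
          · rintro (⟨h, _⟩ | ⟨_, _, h⟩)
            · exact absurd h ha
            · exact h
          · exact fun h => Or.inr ⟨ha, hb, h⟩
        have e2 : srcExtend G U r'.1 b a ↔ r'.1 ⟨b, hb⟩ ⟨a, ha⟩ := by
          constructor
          · rintro (⟨h, _⟩ | ⟨_, _, h⟩)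
            · exact absurd h hb
            · exact h
          · exact fun h => Or.inr ⟨hb, ha, h⟩
        rw [e1, e2]
        exact r'.2.2.1 _ _ hadj
  · rintro ⟨n, f, hn, hcyc, hcl⟩
    obtain ⟨m, rfl⟩ : ∃ m, n = m + 1 := ⟨n - 1, (Nat.succ_pred_eq_of_pos hn).symm⟩
    have hnotU : ∀ i, f i ∉ U := by
      intro i
      rcases Fin.eq_zero_or_eq_succ i with h0 | ⟨k, hk⟩
      · rw [h0, hcl, ← Fin.succ_last]
        exact srcExtend_target hU _ _ (hcyc (Fin.last m))
      · rw [hk]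
        exact srcExtend_target hU _ _ (hcyc k)
    refine r'.2.2.2 ⟨m + 1, fun i => ⟨f i, hnotU i⟩, hn, ?_, Subtype.ext hcl⟩
    intro i
    rcases hcyc i with ⟨h, _⟩ | ⟨ha, hb, h⟩
    · exact absurd h (hnotU i.castSucc)
    · exact h
  · exact fun u hu w => fun h => srcExtend_target hU w u h hu
  · -- left inverse : extend (restrict r) = r
    rintro ⟨r, ⟨h1, h2, h3⟩, hsrc⟩
    apply Subtype.ext
    funext a b
    apply propext
    constructor
    · rintro (⟨ha, hadj⟩ | ⟨_, _, h⟩)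
      · exact (h2 a b hadj).mpr (hsrc a ha b)
      · exact h
    · intro h
      by_cases ha : a ∈ U
      · exact Or.inl ⟨ha, h1 _ _ h⟩
      · have hb : b ∉ U := fun hb => hsrc b hb a h
        exact Or.inr ⟨ha, hb, h⟩
  · -- right inverse : restrict (extend r') = r'
    rintro ⟨r', hr'⟩
    apply Subtype.ext
    funext a b
    obtain ⟨a, ha⟩ := a
    obtain ⟨b, hb⟩ := b
    apply propext
    constructor
    · rintro (⟨h, _⟩ | ⟨_, _, h⟩)
      · exact absurd h ha
      · exact h
    · exact fun h => Or.inr ⟨ha, hb, h⟩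


def colExtend {j : ℕ} (U : Finset V) (g : {v : V // v ∉ U} → Fin j) : V → Fin (j + 1) :=
  fun v => if h : v ∈ U then 0 else (g ⟨v, h⟩).succ

lemma NS_indep (G : SimpleGraph V) (j : ℕ) {U : Finset V} (hU : Indep G U)
    (hne : U.Nonempty) : NS G j U = nS (del G U) j := by
  apply Nat.card_congr
  refine ⟨fun f => ⟨fun v => (f.1 v.1).pred (fun h => v.2 ((f.2.2 v.1).mp h)), ?_, ?_⟩,
          fun g => ⟨colExtend U g.1, ⟨?_, ?_⟩, ?_⟩, ?_, ?_⟩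
  · -- proper on del
    intro u v hadj heq
    apply f.2.1.1 (hadj : G.Adj u.1 v.1)
    have := congrArg Fin.succ heq
    rwa [Fin.succ_pred, Fin.succ_pred] at this
  · -- surjective
    intro c
    obtain ⟨v, hv⟩ := f.2.1.2 c.succ
    have hvU : v ∉ U := fun h => Fin.succ_ne_zero c (hv ▸ (f.2.2 v).mpr h)
    refine ⟨⟨v, hvU⟩, ?_⟩
    simp only [hv, Fin.pred_succ]
  · -- proper of extension
    intro u v hadj heq
    by_cases hu : u ∈ U
    · by_cases hv : v ∈ U
      · exact hU u hu v hv hadj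
      · rw [colExtend, dif_pos hu, colExtend, dif_neg hv] at heq
        exact Fin.succ_ne_zero _ heq.symm
    · by_cases hv : v ∈ U
      · rw [colExtend, dif_neg hu, colExtend, dif_pos hv] at heq
        exact Fin.succ_ne_zero _ heq
      · rw [colExtend, dif_neg hu, colExtend, dif_neg hv] at heq
        exact @g.2.1 ⟨u, hu⟩ ⟨v, hv⟩ hadj (Fin.succ_injective _ heq)
  · -- surjective extension
    intro y
    rcases Fin.eq_zero_or_eq_succ y with h0 | ⟨c, hc⟩
    · obtain ⟨u, hu⟩ := hne
      exact ⟨u, by rw [colExtend, dif_pos hu, h0]⟩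
    · obtain ⟨⟨v, hv⟩, hgv⟩ := g.2.2 c
      exact ⟨v, by rw [colExtend, dif_neg hv, hgv, hc]⟩
  · -- fiber of zero
    intro v
    by_cases hv : v ∈ U
    · simp [colExtend, dif_pos hv, hv]
    · simp [colExtend, dif_neg hv, hv, Fin.succ_ne_zero]
  · -- left inverse
    rintro ⟨f, hf⟩
    apply Subtype.ext
    funext v
    show colExtend U _ v = f v
    by_cases hv : v ∈ U
    · rw [colExtend, dif_pos hv]
      exact ((hf.2 v).mpr hv).symm
    · rw [colExtend, dif_neg hv, Fin.succ_pred]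
  · -- right inverse
    rintro ⟨g, hg⟩
    apply Subtype.ext
    funext v
    obtain ⟨v, hv⟩ := v
    apply Fin.succ_injective
    rw [Fin.succ_pred]
    simp only [colExtend]
    rw [dif_neg hv]


lemma natCard_subsub {α : Type} (p q : α → Prop) [Fintype {y : α // p y}]
    [DecidablePred fun x : {y // p y} => q x.1] :
    Nat.card {x : α // p x ∧ q x} =
      ((univ : Finset {y : α // p y}).filter (fun x => q x.1)).card := by
  rw [Nat.card_congr (Equiv.subtypeSubtypeEquivSubtypeInter p q).symm,
    Nat.card_eq_fintype_card, Fintype.card_subtype]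

lemma A1 (G : SimpleGraph V) (hV : Fintype.card V ≠ 0) :
    (nA G : ℤ) = ∑ U ∈ univ.filter (fun U : Finset V => U.Nonempty),
      (-1) ^ (U.card + 1) * (NA G U : ℤ) := by
  classical
  have hne : Nonempty V := Fintype.card_pos_iff.mp (Nat.pos_of_ne_zero hV)
  have hfin : Finite {r : V → V → Prop // IsAcyclicOrientation G r} := Subtype.finite
  have hfty : Fintype {r : V → V → Prop // IsAcyclicOrientation G r} := Fintype.ofFinite _
  set S : {r : V → V → Prop // IsAcyclicOrientation G r} → Finset V :=
    fun r => univ.filter (fun v => ∀ w, ¬ r.1 w v) with hS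
  have hSne : ∀ r, S r ≠ ∅ := by
    intro r hS0
    obtain ⟨v, hv⟩ := exists_source G r.2
    have : v ∈ S r := by simp [hS, hv]
    simp [hS0] at this
  have hNA : ∀ U : Finset V, (NA G U : ℤ) =
      ∑ r : {r : V → V → Prop // IsAcyclicOrientation G r},
        (if U ⊆ S r then 1 else 0) := by
    intro U
    rw [Finset.sum_boole]
    norm_cast
    rw [NA, natCard_subsub]
    congr 1
    apply Finset.filter_congr
    intro r _
    simp only [hS, Finset.subset_iff, mem_filter, mem_univ, true_and, eq_iff_iff]
    all_goals exact ⟨fun h u hu w => h hu w, fun h u hu => h u hu⟩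
  calc (nA G : ℤ) = ∑ r : {r : V → V → Prop // IsAcyclicOrientation G r}, 1 := by
        rw [nA, Nat.card_eq_fintype_card]
        simp
    _ = ∑ r : {r : V → V → Prop // IsAcyclicOrientation G r},
          ∑ U ∈ univ.filter (fun U : Finset V => U.Nonempty),
            (if U ⊆ S r then (-1 : ℤ) ^ (U.card + 1) else 0) := by
        apply Finset.sum_congr rfl
        intro r _
        rw [← Finset.sum_filter]
        have hset : (univ.filter (fun U : Finset V => U.Nonempty)).filter
            (fun U => U ⊆ S r) = (S r).powerset.erase ∅ := by
          ext U
          simp [Finset.nonempty_iff_ne_empty, and_comm]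
        rw [hset]
        have h1 : ∑ U ∈ (S r).powerset, ((-1 : ℤ)) ^ (U.card + 1) =
            (∑ U ∈ (S r).powerset, ((-1 : ℤ)) ^ U.card) * (-1) := by
          rw [Finset.sum_mul]
          apply Finset.sum_congr rfl
          intro U _
          rw [pow_succ]
        have h2 := Finset.add_sum_erase ((S r).powerset)
          (fun U => ((-1 : ℤ)) ^ (U.card + 1)) (Finset.empty_mem_powerset _)
        rw [Finset.sum_powerset_neg_one_pow_card, if_neg (hSne r)] at h1
        simp only [Finset.card_empty, pow_one, zero_mul] at h1 h2
        rw [h1] at h2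
        omega
    _ = ∑ U ∈ univ.filter (fun U : Finset V => U.Nonempty),
          ∑ r : {r : V → V → Prop // IsAcyclicOrientation G r},
            (if U ⊆ S r then (-1 : ℤ) ^ (U.card + 1) else 0) := Finset.sum_comm
    _ = ∑ U ∈ univ.filter (fun U : Finset V => U.Nonempty),
          (-1) ^ (U.card + 1) * (NA G U : ℤ) := by
        apply Finset.sum_congr rfl
        intro U _
        rw [hNA U, Finset.mul_sum]
        apply Finset.sum_congr rfl
        intro r _
        by_cases h : U ⊆ S r <;> simp [h]

lemma S1 (G : SimpleGraph V) (j : ℕ) :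
    nS G (j + 1) = ∑ U ∈ (univ : Finset (Finset V)), NS G j U := by
  classical
  set P : (V → Fin (j + 1)) → Prop :=
    fun f => (∀ ⦃u v : V⦄, G.Adj u v → f u ≠ f v) ∧ Function.Surjective f with hP
  set fib : {f : V → Fin (j + 1) // P f} → Finset V :=
    fun f => univ.filter (fun v => f.1 v = 0) with hfib
  have key := Finset.card_eq_sum_card_fiberwise
    (f := fib) (s := univ) (t := univ) (fun x _ => mem_univ _)
  rw [nS, Nat.card_eq_fintype_card, ← Finset.card_univ, key]
  apply Finset.sum_congr rfl
  intro U _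
  rw [NS, natCard_subsub (p := P) (q := fun f => ∀ v, f v = 0 ↔ v ∈ U)]
  congr 1
  apply Finset.filter_congr
  intro f _
  simp only [hfib, Finset.ext_iff, mem_filter, mem_univ, true_and, eq_iff_iff]
  all_goals exact ⟨fun h v => h v, fun h v => h v⟩

lemma imageCount (G : SimpleGraph V) {k : ℕ} (T : Finset (Fin k)) :
    Nat.card {f : V → Fin k //
        (∀ ⦃u v : V⦄, G.Adj u v → f u ≠ f v) ∧ univ.image f = T} = nS G T.card := by
  apply Nat.card_congr
  have e := T.equivFin
  refine ⟨fun f => ⟨fun v => e ⟨f.1 v, ?_⟩, ?_, ?_⟩,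
          fun g => ⟨fun v => (e.symm (g.1 v) : Fin k), ?_, ?_⟩, ?_, ?_⟩
  · have : f.1 v ∈ univ.image f.1 := Finset.mem_image_of_mem _ (mem_univ v)
    rwa [f.2.2] at this
  · intro u v hadj heq
    apply f.2.1 hadj
    have := congrArg (fun x => (e.symm x : Fin k)) heq
    simpa using this
  · intro c
    have hmem : (e.symm c : Fin k) ∈ univ.image f.1 := by
      rw [f.2.2]; exact (e.symm c).2
    obtain ⟨v, _, hv⟩ := Finset.mem_image.mp hmem
    refine ⟨v, ?_⟩
    exact (congrArg e (Subtype.ext hv)).trans (e.apply_symm_apply c)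
  · intro u v hadj heq
    exact g.2.1 hadj (e.symm.injective (Subtype.ext heq))
  · apply Finset.Subset.antisymm
    · intro t ht
      obtain ⟨v, _, hv⟩ := Finset.mem_image.mp ht
      rw [← hv]
      exact (e.symm (g.1 v)).2
    · intro t ht
      obtain ⟨v, hv⟩ := g.2.2 (e ⟨t, ht⟩)
      apply Finset.mem_image.mpr
      refine ⟨v, mem_univ v, ?_⟩
      rw [hv, Equiv.symm_apply_apply]
  · rintro ⟨f, hf⟩
    apply Subtype.ext
    funext v
    simp
  · rintro ⟨g, hg⟩
    apply Subtype.ext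
    funext v
    exact (congrArg e (Subtype.ext rfl)).trans (e.apply_symm_apply (g v))

lemma C1 (G : SimpleGraph V) (k : ℕ) :
    nC G k = ∑ j ∈ range (Fintype.card V + 1), k.choose j * nS G j := by
  classical
  set P : (V → Fin k) → Prop := fun f => ∀ ⦃u v : V⦄, G.Adj u v → f u ≠ f v with hP
  set fib : {f : V → Fin k // P f} → Finset (Fin k) := fun f => univ.image f.1 with hfib
  have key := Finset.card_eq_sum_card_fiberwise
    (f := fib) (s := univ) (t := univ) (fun x _ => mem_univ _)
  have step1 : nC G k = ∑ T ∈ (univ : Finset (Finset (Fin k))), nS G T.card := by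
    rw [nC, Nat.card_eq_fintype_card, ← Finset.card_univ, key]
    apply Finset.sum_congr rfl
    intro T _
    rw [← imageCount G T, natCard_subsub (p := P) (q := fun f => univ.image f = T)]
  rw [step1]
  have step2 : ∑ T ∈ (univ : Finset (Finset (Fin k))), nS G T.card =
      ∑ j ∈ range (k + 1), k.choose j * nS G j := by
    rw [← Finset.sum_fiberwise_of_maps_to (g := fun T : Finset (Fin k) => T.card)
      (t := range (k + 1)) (fun T _ => by
        simp only [mem_range]
        have := Finset.card_le_card (Finset.subset_univ T)
        simp only [Finset.card_univ, Fintype.card_fin] at this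
        omega) (fun T => nS G T.card)]
    apply Finset.sum_congr rfl
    intro j _
    have : ∀ T ∈ univ.filter (fun T : Finset (Fin k) => T.card = j),
        nS G T.card = nS G j := by
      intro T hT
      rw [(mem_filter.mp hT).2]
    rw [Finset.sum_congr rfl this, Finset.sum_const, smul_eq_mul]
    congr 1
    rw [← Finset.powerset_univ, ← Finset.powersetCard_eq_filter,
      Finset.card_powersetCard, Finset.card_univ, Fintype.card_fin]
  rw [step2]
  -- adjust range
  set n := Fintype.card V
  have e1 : ∑ j ∈ range (k + 1), k.choose j * nS G j =
      ∑ j ∈ range (max k n + 1), k.choose j * nS G j := by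
    apply Finset.sum_subset
    · intro x hx; simp only [mem_range] at *; omega
    · intro x _ hx
      simp only [mem_range, not_lt] at hx
      rw [Nat.choose_eq_zero_of_lt (by omega), zero_mul]
  have e2 : ∑ j ∈ range (n + 1), k.choose j * nS G j =
      ∑ j ∈ range (max k n + 1), k.choose j * nS G j := by
    apply Finset.sum_subset
    · intro x hx; simp only [mem_range] at *; omega
    · intro x _ hx
      simp only [mem_range, not_lt] at hx
      rw [nS_zero_of_gt G (by omega), mul_zero]
  rw [e1, ← e2]


lemma main (n : ℕ) : ∀ (W : Type) [Fintype W] [DecidableEq W] (G : SimpleGraph W),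
    Fintype.card W = n → (nA G : ℤ) = T G := by
  induction n using Nat.strong_induction_on with
  | _ n IH =>
    intro W _ _ G hn
    subst hn
    by_cases h0 : Fintype.card W = 0
    · rw [nA_empty G h0]
      simp [T, h0, nS_zero_empty G h0]
    · obtain ⟨p, hp⟩ : ∃ p, Fintype.card W = p + 1 := ⟨Fintype.card W - 1, by omega⟩
      -- T G rewritten
      have hS1 : ∀ j, ((nS G (j + 1) : ℤ)) = ∑ U ∈ univ, (NS G j U : ℤ) := by
        intro j
        rw [S1 G j]
        push_cast
        rfl
      have hT : T G = ∑ U ∈ univ.filter (fun U : Finset W => U.Nonempty),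
          ∑ j ∈ range (p + 1), (-1) ^ (p - j) * (NS G j U : ℤ) := by
        rw [T, hp, Finset.sum_range_succ' (fun j => (-1 : ℤ) ^ (p + 1 - j) * (nS G j : ℤ)) (p + 1)]
        rw [nS_zero_of_ne G h0]
        simp only [Nat.cast_zero, mul_zero, add_zero, Nat.succ_sub_succ]
        have : ∀ j ∈ range (p + 1), (-1 : ℤ) ^ (p - j) * (nS G (j + 1) : ℤ) =
            ∑ U ∈ univ, (-1 : ℤ) ^ (p - j) * (NS G j U : ℤ) := by
          intro j _
          rw [hS1 j, Finset.mul_sum]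
        rw [Finset.sum_congr rfl this, Finset.sum_comm]
        symm
        apply Finset.sum_subset (Finset.filter_subset _ _)
        intro U _ hU
        simp only [mem_filter, mem_univ, true_and] at hU
        rw [Finset.not_nonempty_iff_eq_empty] at hU
        subst hU
        simp [NS_empty_vanish]
      rw [hT, A1 G h0]
      apply Finset.sum_congr rfl
      intro U hU
      have hUne : U.Nonempty := (mem_filter.mp hU).2
      by_cases hInd : Indep G U
      · have hcd : Fintype.card {v : W // v ∉ U} = p + 1 - U.card := by
          rw [cardDel, hp]
        have hU1 : 1 ≤ U.card := hUne.card_pos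
        have hUle : U.card ≤ p + 1 := by
          have := Finset.card_le_card (Finset.subset_univ U)
          rwa [Finset.card_univ, hp] at this
        have hIH := IH (p + 1 - U.card) (by omega) {v : W // v ∉ U} (del G U) hcd
        rw [NA_indep G hInd, hIH]
        have hNSr : ∀ j ∈ range (p + 1), ((-1 : ℤ)) ^ (p - j) * (NS G j U : ℤ) =
            (-1 : ℤ) ^ (p - j) * (nS (del G U) j : ℤ) := by
          intro j _
          rw [NS_indep G j hInd hUne]
        rw [Finset.sum_congr rfl hNSr]
        set m' := p + 1 - U.card with hm'
        have hstep : ∑ j ∈ range (p + 1), (-1 : ℤ) ^ (p - j) * (nS (del G U) j : ℤ) =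
            ∑ j ∈ range (m' + 1), (-1 : ℤ) ^ (p - j) * (nS (del G U) j : ℤ) := by
          symm
          apply Finset.sum_subset
          · intro x hx
            simp only [mem_range] at *
            omega
          · intro j _ hj
            simp only [mem_range, not_lt] at hj
            rw [nS_zero_of_gt (del G U) (by omega : Fintype.card {v : W // v ∉ U} < j)]
            simp
        rw [hstep, T, hcd, Finset.mul_sum]
        symm
        apply Finset.sum_congr rfl
        intro j hj
        simp only [mem_range] at hj
        have hjm : j ≤ m' := by omega
        have hjp : j ≤ p := by omega
        have hsgn : ((-1 : ℤ)) ^ (p - j) = (-1) ^ (U.card + 1) * (-1) ^ (m' - j) := by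
          rw [negOnePowSub hjp, negOnePowSub hjm]
          have h2 : ((-1 : ℤ)) ^ (U.card + 1) * (-1) ^ m' = (-1) ^ p := by
            rw [← pow_add]
            have h3 : U.card + 1 + m' = p + 2 := by omega
            rw [h3, pow_add]
            norm_num
          rw [← h2]
          ring
        rw [hsgn]
        ring
      · have hz1 : NA G U = 0 := NA_nonindep G hInd
        have hz2 : ∀ j ∈ range (p + 1), ((-1 : ℤ)) ^ (p - j) * (NS G j U : ℤ) = 0 := by
          intro j _
          rw [NS_nonindep G j hInd]
          simp
        rw [hz1, Finset.sum_congr rfl hz2]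
        simp


lemma descPoch_neg_one (j : ℕ) :
    (descPochhammer ℚ j).eval (-1) = (-1) ^ j * (j.factorial : ℚ) := by
  induction j with
  | zero => simp
  | succ j ih =>
    rw [descPochhammer_succ_eval, ih, Nat.factorial_succ]
    push_cast
    ring

lemma C2 (G : SimpleGraph V) (P : Polynomial ℤ)
    (hP : ∀ k : ℕ, P.eval (k : ℤ) = nC G k) :
    P.eval (-1) = ∑ j ∈ range (Fintype.card V + 1), (-1) ^ j * (nS G j : ℤ) := by
  set n := Fintype.card V with hn
  set Q : Polynomial ℚ := ∑ j ∈ range (n + 1),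
    Polynomial.C ((nS G j : ℚ) / (j.factorial : ℚ)) * descPochhammer ℚ j with hQ
  have hfac : ∀ j : ℕ, ((j.factorial : ℚ)) ≠ 0 :=
    fun j => Nat.cast_ne_zero.mpr (Nat.factorial_ne_zero j)
  have hQev : ∀ k : ℕ, Q.eval (k : ℚ) = (nC G k : ℚ) := by
    intro k
    rw [hQ, Polynomial.eval_finset_sum]
    simp only [Polynomial.eval_mul, Polynomial.eval_C]
    rw [C1 G k]
    push_cast
    apply Finset.sum_congr rfl
    intro j _
    rw [descPochhammer_eval_eq_descFactorial ℚ k j,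
      Nat.descFactorial_eq_factorial_mul_choose]
    push_cast
    field_simp
  have hPm : P.map (Int.castRingHom ℚ) = Q := by
    have hroot : Set.Infinite {x : ℚ | (P.map (Int.castRingHom ℚ) - Q).IsRoot x} := by
      apply Set.Infinite.mono (s := Set.range ((↑) : ℕ → ℚ))
      · rintro x ⟨k, rfl⟩
        simp only [Set.mem_setOf_eq, Polynomial.IsRoot, Polynomial.eval_sub,
          Polynomial.eval_map]
        rw [Polynomial.eval₂_at_natCast, hQev k, hP k]
        simp
      · exact Set.infinite_range_of_injective Nat.cast_injective
    exact sub_eq_zero.mp (Polynomial.eq_zero_of_infinite_isRoot _ hroot)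
  have hcast : ((P.eval (-1) : ℤ) : ℚ) = Q.eval (-1) := by
    rw [← hPm, Polynomial.eval_map,
      show ((-1 : ℚ)) = (((-1 : ℤ) : ℚ)) by norm_num,
      Polynomial.eval₂_at_intCast]
    simp
  have hQ1 : Q.eval (-1) = ∑ j ∈ range (n + 1), (-1) ^ j * (nS G j : ℚ) := by
    rw [hQ, Polynomial.eval_finset_sum]
    apply Finset.sum_congr rfl
    intro j _
    rw [Polynomial.eval_mul, Polynomial.eval_C, descPoch_neg_one]
    field_simp
  have : ((P.eval (-1) : ℤ) : ℚ) =
      ((∑ j ∈ range (n + 1), (-1) ^ j * (nS G j : ℤ) : ℤ) : ℚ) := by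
    rw [hcast, hQ1]
    push_cast
    rfl
  exact_mod_cast this

end StanleyAux

/-- Stanley's theorem: the number of acyclic orientations of a finite simple
graph `G` equals `(-1)^{|V|} P(G, -1)`, where `P(G, ·)` is the chromatic
polynomial of `G`. -/
theorem stanley_acyclic_orientations {V : Type} [Fintype V] [DecidableEq V]
    (G : SimpleGraph V) (P : Polynomial ℤ)
    (hP : ∀ k : ℕ, P.eval (k : ℤ) =
      Nat.card {f : V → Fin k // ∀ ⦃u v : V⦄, G.Adj u v → f u ≠ f v}) :
    (Nat.card {r : V → V → Prop // IsAcyclicOrientation G r} : ℤ) =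
      (-1) ^ (Fintype.card V) * P.eval (-1) := by
  have hP' : ∀ k : ℕ, P.eval (k : ℤ) = StanleyAux.nC G k := hP
  rw [StanleyAux.C2 G P hP']
  have hmain := StanleyAux.main (Fintype.card V) V G rfl
  show (StanleyAux.nA G : ℤ) = _
  rw [hmain, StanleyAux.T, Finset.mul_sum]
  apply Finset.sum_congr rfl
  intro j hj
  simp only [Finset.mem_range] at hj
  rw [StanleyAux.negOnePowSub (by omega : j ≤ Fintype.card V)]
  ring
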